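/- If P(Y ∈ y_a, M ∈ m_a | X=1) + P(Y ∉ y_a, M ∈ m_a | X=0) > 1, then μ({M1 ∈ m_a} ∩ {M0 ∈ m_a}) > 0 and [P(Y ∈ y_a, M ∈ m_a | X=1) + P(Y ∉ y_a, M ∈ m_a | X=0) − 1] / [P(M ∈ m_a | X=1) − P(M ∉ m_a | X=0)] ≤ [μ(Y1 ∈ y_a, Y0 ∉ y_a, M1 ∈ m_a, M0 ∈ m_a) − μ(Y1 ∉ y_a, Y0 ∈ y_a, M1 ∈ m_a, M0 ∈ m_a)] / μ({M1 ∈ m_a} ∩ {M0 ∈ m_a}); moreover the right-hand side equals P(Y1 ∈ y_a, Y0 ∉ y_a | M1 ∈ m_a, M0 ∈ m_a) − P(Y1 ∉ y_a, Y0 ∈ y_a | M1 ∈ m_a, M0 ∈ m_a), where P(A | B) := μ(A ∩ B)/μ(B). -/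

import Mathlib

open MeasureTheory ProbabilityTheory

/-- Conditional probability `P(A | B) = mu(A ∩ B) / mu(B)` as a real number. -/
noncomputable def condP {Ω : Type*} [MeasurableSpace Ω] (μ : Measure Ω)
    (A B : Set Ω) : ℝ :=
  (μ (A ∩ B)).toReal / (μ B).toReal

set_option maxHeartbeats 2000000 in
theorem statement16
    {Ω : Type*} [MeasurableSpace Ω] (μ : Measure Ω) [IsProbabilityMeasure μ]
    {ny nm : ℕ} (hny : 0 < ny) (hnm : 0 < nm)
    (Y1 Y0 Y : Ω → (Fin ny → ℝ)) (M1 M0 M : Ω → (Fin nm → ℝ)) (X : Ω → ℕ)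
    (hY1meas : Measurable Y1) (hY0meas : Measurable Y0)
    (hM1meas : Measurable M1) (hM0meas : Measurable M0)
    (hXmeas : Measurable X) (hXbin : ∀ ω, X ω ≤ 1)
    (hXpos : 0 < μ {ω | X ω = 1}) (hXlt : μ {ω | X ω = 1} < 1)
    (hindep : IndepFun X (fun ω => (Y1 ω, Y0 ω, M1 ω, M0 ω)) μ)
    (hYcons1 : ∀ ω, X ω = 1 → Y ω = Y1 ω)
    (hYcons0 : ∀ ω, X ω = 0 → Y ω = Y0 ω)
    (hMcons1 : ∀ ω, X ω = 1 → M ω = M1 ω)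
    (hMcons0 : ∀ ω, X ω = 0 → M ω = M0 ω)
    (ya : Set (Fin ny → ℝ)) (ma : Set (Fin nm → ℝ))
    (hya : MeasurableSet ya) (hma : MeasurableSet ma)
    (hemp : condP μ {ω | Y ω ∈ ya ∧ M ω ∈ ma} {ω | X ω = 1}
        + condP μ {ω | Y ω ∉ ya ∧ M ω ∈ ma} {ω | X ω = 0} > 1) :
    0 < μ ({ω | M1 ω ∈ ma} ∩ {ω | M0 ω ∈ ma}) ∧
    (condP μ {ω | Y ω ∈ ya ∧ M ω ∈ ma} {ω | X ω = 1}
        + condP μ {ω | Y ω ∉ ya ∧ M ω ∈ ma} {ω | X ω = 0} - 1)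
      / (condP μ {ω | M ω ∈ ma} {ω | X ω = 1}
        - condP μ {ω | M ω ∉ ma} {ω | X ω = 0})
      ≤ ((μ {ω | Y1 ω ∈ ya ∧ Y0 ω ∉ ya ∧ M1 ω ∈ ma ∧ M0 ω ∈ ma}).toReal - (μ {ω | Y1 ω ∉ ya ∧ Y0 ω ∈ ya ∧ M1 ω ∈ ma ∧ M0 ω ∈ ma}).toReal)
        / (μ ({ω | M1 ω ∈ ma} ∩ {ω | M0 ω ∈ ma})).toReal ∧
    ((μ {ω | Y1 ω ∈ ya ∧ Y0 ω ∉ ya ∧ M1 ω ∈ ma ∧ M0 ω ∈ ma}).toReal - (μ {ω | Y1 ω ∉ ya ∧ Y0 ω ∈ ya ∧ M1 ω ∈ ma ∧ M0 ω ∈ ma}).toReal)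
      / (μ ({ω | M1 ω ∈ ma} ∩ {ω | M0 ω ∈ ma})).toReal
      = condP μ {ω | Y1 ω ∈ ya ∧ Y0 ω ∉ ya} {ω | M1 ω ∈ ma ∧ M0 ω ∈ ma}
        - condP μ {ω | Y1 ω ∉ ya ∧ Y0 ω ∈ ya} {ω | M1 ω ∈ ma ∧ M0 ω ∈ ma} := by
  classical
  set T : Ω → (Fin ny → ℝ) × ((Fin ny → ℝ) × ((Fin nm → ℝ) × (Fin nm → ℝ))) :=
    fun ω => (Y1 ω, Y0 ω, M1 ω, M0 ω) with hT
  -- measurable sets on Ω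
  have mY1 : MeasurableSet {ω | Y1 ω ∈ ya} := hY1meas hya
  have mY0 : MeasurableSet {ω | Y0 ω ∈ ya} := hY0meas hya
  have mM1 : MeasurableSet {ω | M1 ω ∈ ma} := hM1meas hma
  have mM0 : MeasurableSet {ω | M0 ω ∈ ma} := hM0meas hma
  have mC : MeasurableSet ({ω | M1 ω ∈ ma} ∩ {ω | M0 ω ∈ ma}) := mM1.inter mM0
  -- X events
  have hX1m : MeasurableSet {ω | X ω = 1} := hXmeas (measurableSet_singleton 1)
  have hX1ne : μ {ω | X ω = 1} ≠ 0 := hXpos.ne'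
  have hX0eq : {ω | X ω = 0} = {ω | X ω = 1}ᶜ := by
    ext ω
    have := hXbin ω
    simp only [Set.mem_setOf_eq, Set.mem_compl_iff]
    omega
  have hX0ne : μ {ω | X ω = 0} ≠ 0 := by
    rw [hX0eq, prob_compl_eq_one_sub hX1m]
    intro h
    rw [tsub_eq_zero_iff_le] at h
    exact absurd h (not_le.mpr hXlt)
  -- key independence lemma
  have key : ∀ (x : ℕ) (B : Set ((Fin ny → ℝ) × ((Fin ny → ℝ) × ((Fin nm → ℝ) × (Fin nm → ℝ))))),
      MeasurableSet B → μ {ω | X ω = x} ≠ 0 →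
      condP μ (T ⁻¹' B) {ω | X ω = x} = (μ (T ⁻¹' B)).toReal := by
    intro x B hB hx
    have hset : (T ⁻¹' B) ∩ {ω | X ω = x} = X ⁻¹' ({x} : Set ℕ) ∩ T ⁻¹' B := by
      ext ω; simp [Set.mem_preimage, and_comm]
    have hmul := hindep.measure_inter_preimage_eq_mul ({x} : Set ℕ) B
      (measurableSet_singleton x) hB
    have hxpre : X ⁻¹' ({x} : Set ℕ) = {ω | X ω = x} := by ext ω; simp
    unfold condP
    rw [hset, hmul, hxpre, ENNReal.toReal_mul, mul_comm, mul_div_assoc, div_self, mul_one]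
    exact ENNReal.toReal_ne_zero.mpr ⟨hx, measure_ne_top μ _⟩
  -- translate the four condP's
  have hc1 : condP μ {ω | Y ω ∈ ya ∧ M ω ∈ ma} {ω | X ω = 1}
      = (μ {ω | Y1 ω ∈ ya ∧ M1 ω ∈ ma}).toReal := by
    have hswap : {ω | Y ω ∈ ya ∧ M ω ∈ ma} ∩ {ω | X ω = 1}
        = {ω | Y1 ω ∈ ya ∧ M1 ω ∈ ma} ∩ {ω | X ω = 1} := by
      ext ω
      simp only [Set.mem_inter_iff, Set.mem_setOf_eq]
      constructor
      · rintro ⟨⟨hy, hm⟩, hx⟩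
        exact ⟨⟨by rwa [← hYcons1 ω hx], by rwa [← hMcons1 ω hx]⟩, hx⟩
      · rintro ⟨⟨hy, hm⟩, hx⟩
        exact ⟨⟨by rwa [hYcons1 ω hx], by rwa [hMcons1 ω hx]⟩, hx⟩
    have hpre : {ω | Y1 ω ∈ ya ∧ M1 ω ∈ ma}
        = T ⁻¹' (ya ×ˢ (Set.univ ×ˢ (ma ×ˢ Set.univ))) := by
      ext ω; simp [hT]
    have h1 : condP μ {ω | Y ω ∈ ya ∧ M ω ∈ ma} {ω | X ω = 1}
        = condP μ {ω | Y1 ω ∈ ya ∧ M1 ω ∈ ma} {ω | X ω = 1} := by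
      unfold condP; rw [hswap]
    rw [h1, hpre]
    exact key 1 _ (hya.prod (MeasurableSet.univ.prod (hma.prod MeasurableSet.univ))) hX1ne
  have hc0 : condP μ {ω | Y ω ∉ ya ∧ M ω ∈ ma} {ω | X ω = 0}
      = (μ {ω | Y0 ω ∉ ya ∧ M0 ω ∈ ma}).toReal := by
    have hswap : {ω | Y ω ∉ ya ∧ M ω ∈ ma} ∩ {ω | X ω = 0}
        = {ω | Y0 ω ∉ ya ∧ M0 ω ∈ ma} ∩ {ω | X ω = 0} := by
      ext ω
      simp only [Set.mem_inter_iff, Set.mem_setOf_eq]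
      constructor
      · rintro ⟨⟨hy, hm⟩, hx⟩
        exact ⟨⟨by rwa [← hYcons0 ω hx], by rwa [← hMcons0 ω hx]⟩, hx⟩
      · rintro ⟨⟨hy, hm⟩, hx⟩
        exact ⟨⟨by rwa [hYcons0 ω hx], by rwa [hMcons0 ω hx]⟩, hx⟩
    have hpre : {ω | Y0 ω ∉ ya ∧ M0 ω ∈ ma}
        = T ⁻¹' (Set.univ ×ˢ (yaᶜ ×ˢ (Set.univ ×ˢ ma))) := by
      ext ω; simp [hT]
    have h1 : condP μ {ω | Y ω ∉ ya ∧ M ω ∈ ma} {ω | X ω = 0}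
        = condP μ {ω | Y0 ω ∉ ya ∧ M0 ω ∈ ma} {ω | X ω = 0} := by
      unfold condP; rw [hswap]
    rw [h1, hpre]
    exact key 0 _ (MeasurableSet.univ.prod (hya.compl.prod
      (MeasurableSet.univ.prod hma))) hX0ne
  have hm1 : condP μ {ω | M ω ∈ ma} {ω | X ω = 1} = (μ {ω | M1 ω ∈ ma}).toReal := by
    have hswap : {ω | M ω ∈ ma} ∩ {ω | X ω = 1}
        = {ω | M1 ω ∈ ma} ∩ {ω | X ω = 1} := by
      ext ω
      simp only [Set.mem_inter_iff, Set.mem_setOf_eq]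
      constructor
      · rintro ⟨hm, hx⟩; exact ⟨by rwa [← hMcons1 ω hx], hx⟩
      · rintro ⟨hm, hx⟩; exact ⟨by rwa [hMcons1 ω hx], hx⟩
    have hpre : {ω | M1 ω ∈ ma}
        = T ⁻¹' (Set.univ ×ˢ (Set.univ ×ˢ (ma ×ˢ Set.univ))) := by
      ext ω; simp [hT]
    have h1 : condP μ {ω | M ω ∈ ma} {ω | X ω = 1}
        = condP μ {ω | M1 ω ∈ ma} {ω | X ω = 1} := by
      unfold condP; rw [hswap]
    rw [h1, hpre]
    exact key 1 _ (MeasurableSet.univ.prod (MeasurableSet.univ.prod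
      (hma.prod MeasurableSet.univ))) hX1ne
  have hm0 : condP μ {ω | M ω ∉ ma} {ω | X ω = 0} = (μ {ω | M0 ω ∉ ma}).toReal := by
    have hswap : {ω | M ω ∉ ma} ∩ {ω | X ω = 0}
        = {ω | M0 ω ∉ ma} ∩ {ω | X ω = 0} := by
      ext ω
      simp only [Set.mem_inter_iff, Set.mem_setOf_eq]
      constructor
      · rintro ⟨hm, hx⟩; exact ⟨by rwa [← hMcons0 ω hx], hx⟩
      · rintro ⟨hm, hx⟩; exact ⟨by rwa [hMcons0 ω hx], hx⟩
    have hpre : {ω | M0 ω ∉ ma}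
        = T ⁻¹' (Set.univ ×ˢ (Set.univ ×ˢ (Set.univ ×ˢ maᶜ))) := by
      ext ω; simp [hT]
    have h1 : condP μ {ω | M ω ∉ ma} {ω | X ω = 0}
        = condP μ {ω | M0 ω ∉ ma} {ω | X ω = 0} := by
      unfold condP; rw [hswap]
    rw [h1, hpre]
    exact key 0 _ (MeasurableSet.univ.prod (MeasurableSet.univ.prod
      (MeasurableSet.univ.prod hma.compl))) hX0ne
  -- abbreviations for sets
  set A1 : Set Ω := {ω | Y1 ω ∈ ya ∧ M1 ω ∈ ma} with hA1def
  set A0 : Set Ω := {ω | Y0 ω ∉ ya ∧ M0 ω ∈ ma} with hA0def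
  set C : Set Ω := {ω | M1 ω ∈ ma} ∩ {ω | M0 ω ∈ ma} with hCdef
  set Aset : Set Ω := {ω | Y1 ω ∈ ya ∧ Y0 ω ∉ ya ∧ M1 ω ∈ ma ∧ M0 ω ∈ ma} with hAsetdef
  set Bset : Set Ω := {ω | Y1 ω ∉ ya ∧ Y0 ω ∈ ya ∧ M1 ω ∈ ma ∧ M0 ω ∈ ma} with hBsetdef
  set Ppp : Set Ω := {ω | Y1 ω ∈ ya ∧ Y0 ω ∈ ya ∧ M1 ω ∈ ma ∧ M0 ω ∈ ma} with hPppdef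
  set Pmm : Set Ω := {ω | Y1 ω ∉ ya ∧ Y0 ω ∉ ya ∧ M1 ω ∈ ma ∧ M0 ω ∈ ma} with hPmmdef
  have mA1 : MeasurableSet A1 := mY1.inter mM1
  have mA0 : MeasurableSet A0 := mY0.compl.inter mM0
  have mAset : MeasurableSet Aset := mY1.inter (mY0.compl.inter (mM1.inter mM0))
  have mBset : MeasurableSet Bset := mY1.compl.inter (mY0.inter (mM1.inter mM0))
  have mPpp : MeasurableSet Ppp := mY1.inter (mY0.inter (mM1.inter mM0))
  have mPmm : MeasurableSet Pmm := mY1.compl.inter (mY0.compl.inter (mM1.inter mM0))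
  -- real values
  set p1 : ℝ := (μ A1).toReal with hp1def
  set p0 : ℝ := (μ A0).toReal with hp0def
  set a : ℝ := (μ Aset).toReal with hadef
  set b : ℝ := (μ Bset).toReal with hbdef
  set c : ℝ := (μ C).toReal with hcdef2
  set q1 : ℝ := (μ {ω | M1 ω ∈ ma}).toReal with hq1def
  set r0 : ℝ := (μ {ω | M0 ω ∈ ma}).toReal with hr0def
  -- decompositions
  have hA1C : A1 ∩ C = Aset ∪ Ppp := by
    ext ω
    simp only [hA1def, hCdef, hAsetdef, hPppdef, Set.mem_inter_iff, Set.mem_union,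
      Set.mem_setOf_eq]
    tauto
  have hA0C : A0 ∩ C = Aset ∪ Pmm := by
    ext ω
    simp only [hA0def, hCdef, hAsetdef, hPmmdef, Set.mem_inter_iff, Set.mem_union,
      Set.mem_setOf_eq]
    tauto
  have hCsplit : C = (Aset ∪ Ppp) ∪ (Bset ∪ Pmm) := by
    ext ω
    simp only [hCdef, hAsetdef, hBsetdef, hPppdef, hPmmdef, Set.mem_inter_iff,
      Set.mem_union, Set.mem_setOf_eq]
    tauto
  have dAP : Disjoint Aset Ppp := by
    rw [Set.disjoint_left]
    rintro ω ⟨_, h2, _⟩ ⟨_, h2', _⟩; exact h2 h2'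
  have dAM : Disjoint Aset Pmm := by
    rw [Set.disjoint_left]
    rintro ω ⟨h1, _⟩ ⟨h1', _⟩; exact h1' h1
  have dBM : Disjoint Bset Pmm := by
    rw [Set.disjoint_left]
    rintro ω ⟨_, h2, _⟩ ⟨_, h2', _⟩; exact h2' h2
  have dUnion : Disjoint (Aset ∪ Ppp) (Bset ∪ Pmm) := by
    rw [Set.disjoint_left]
    rintro ω (⟨h1, _⟩ | ⟨h1, _⟩) (⟨h1', _⟩ | ⟨h1', _⟩) <;> exact h1' h1
  -- measure identities in ℝ
  have hfin : ∀ s : Set Ω, μ s ≠ ⊤ := fun s => measure_ne_top μ s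
  have hu1 : (μ (A1 ∩ C)).toReal = a + (μ Ppp).toReal := by
    rw [hA1C, measure_union dAP mPpp, ENNReal.toReal_add (hfin _) (hfin _)]
  have hu0 : (μ (A0 ∩ C)).toReal = a + (μ Pmm).toReal := by
    rw [hA0C, measure_union dAM mPmm, ENNReal.toReal_add (hfin _) (hfin _)]
  have hcsum : c = (a + (μ Ppp).toReal) + (b + (μ Pmm).toReal) := by
    rw [hcdef2, hCsplit, measure_union dUnion (mBset.union mPmm),
      measure_union dAP mPpp, measure_union dBM mPmm,
      ENNReal.toReal_add (ENNReal.add_ne_top.mpr ⟨hfin _, hfin _⟩)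
        (ENNReal.add_ne_top.mpr ⟨hfin _, hfin _⟩),
      ENNReal.toReal_add (hfin _) (hfin _), ENNReal.toReal_add (hfin _) (hfin _)]
  -- p1 = u1 + v1 etc.
  have hp1split : p1 = (μ (A1 ∩ C)).toReal + (μ (A1 \ C)).toReal := by
    rw [hp1def, ← measure_inter_add_diff A1 mC,
      ENNReal.toReal_add (hfin _) (hfin _)]
  have hp0split : p0 = (μ (A0 ∩ C)).toReal + (μ (A0 \ C)).toReal := by
    rw [hp0def, ← measure_inter_add_diff A0 mC,
      ENNReal.toReal_add (hfin _) (hfin _)]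
  -- v1 + c ≤ q1
  have hv1 : (μ (A1 \ C)).toReal + c ≤ q1 := by
    have hsub : A1 \ C ⊆ {ω | M1 ω ∈ ma} \ C := by
      intro ω hω
      exact ⟨hω.1.2, hω.2⟩
    have hmono : (μ (A1 \ C)).toReal ≤ (μ ({ω | M1 ω ∈ ma} \ C)).toReal :=
      ENNReal.toReal_mono (hfin _) (measure_mono hsub)
    have heq : (μ ({ω | M1 ω ∈ ma} \ C)).toReal + c = q1 := by
      have h1 : {ω | M1 ω ∈ ma} ∩ C = C := by
        rw [hCdef]; exact Set.inter_eq_self_of_subset_right Set.inter_subset_left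
      rw [hq1def, hcdef2, ← measure_inter_add_diff {ω | M1 ω ∈ ma} mC, h1,
        ENNReal.toReal_add (hfin _) (hfin _), add_comm]
    linarith
  have hv0 : (μ (A0 \ C)).toReal + c ≤ r0 := by
    have hsub : A0 \ C ⊆ {ω | M0 ω ∈ ma} \ C := by
      intro ω hω
      exact ⟨hω.1.2, hω.2⟩
    have hmono : (μ (A0 \ C)).toReal ≤ (μ ({ω | M0 ω ∈ ma} \ C)).toReal :=
      ENNReal.toReal_mono (hfin _) (measure_mono hsub)
    have heq : (μ ({ω | M0 ω ∈ ma} \ C)).toReal + c = r0 := by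
      have h1 : {ω | M0 ω ∈ ma} ∩ C = C := by
        rw [hCdef]; exact Set.inter_eq_self_of_subset_right Set.inter_subset_right
      rw [hr0def, hcdef2, ← measure_inter_add_diff {ω | M0 ω ∈ ma} mC, h1,
        ENNReal.toReal_add (hfin _) (hfin _), add_comm]
    linarith
  -- q1 + r0 ≤ 1 + c
  have hqr : q1 + r0 ≤ 1 + c := by
    have h := measure_union_add_inter (μ := μ) {ω | M1 ω ∈ ma} mM0
    have hle : μ ({ω | M1 ω ∈ ma} ∪ {ω | M0 ω ∈ ma}) ≤ 1 := prob_le_one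
    have h2 : μ {ω | M1 ω ∈ ma} + μ {ω | M0 ω ∈ ma} ≤ 1 + μ C := by
      rw [← h, hCdef]
      exact add_le_add hle le_rfl
    have h3 := ENNReal.toReal_mono (ENNReal.add_ne_top.mpr ⟨ENNReal.one_ne_top, hfin _⟩) h2
    rw [ENNReal.toReal_add (hfin _) (hfin _), ENNReal.toReal_add ENNReal.one_ne_top (hfin _),
      ENNReal.toReal_one] at h3
    exact h3
  -- basic bounds
  have hp1q1 : p1 ≤ q1 :=
    ENNReal.toReal_mono (hfin _) (measure_mono (fun ω hω => hω.2))
  have hp0r0 : p0 ≤ r0 :=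
    ENNReal.toReal_mono (hfin _) (measure_mono (fun ω hω => hω.2))
  have hac : a ≤ c := by
    apply ENNReal.toReal_mono (hfin _)
    apply measure_mono
    rintro ω ⟨_, _, h3, h4⟩
    exact ⟨h3, h4⟩
  have hb0 : (0:ℝ) ≤ b := ENNReal.toReal_nonneg
  have hppp0 : (0:ℝ) ≤ (μ Ppp).toReal := ENNReal.toReal_nonneg
  have hpmm0 : (0:ℝ) ≤ (μ Pmm).toReal := ENNReal.toReal_nonneg
  -- the hypothesis in real form
  rw [hc1, hc0] at hemp
  -- key inequality: p1 + p0 - 1 ≤ a - b + (q1 + r0 - 1) - c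
  have hkey : p1 + p0 - 1 ≤ a - b + (q1 + r0 - 1) - c := by linarith
  have hd_pos : (0:ℝ) < q1 + r0 - 1 := by linarith
  have hc_pos : (0:ℝ) < c := by linarith
  have hμC : 0 < μ C := by
    rw [pos_iff_ne_zero]
    intro h
    rw [hcdef2, h] at hc_pos
    simp at hc_pos
  refine ⟨hμC, ?_, ?_⟩
  · -- the main inequality
    rw [hc1, hc0, hm1, hm0]
    have hr0' : (μ {ω | M0 ω ∉ ma}).toReal = 1 - r0 := by
      have hcompl : {ω | M0 ω ∉ ma} = {ω | M0 ω ∈ ma}ᶜ := rfl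
      rw [hcompl, prob_compl_eq_one_sub mM0, hr0def,
        ENNReal.toReal_sub_of_le prob_le_one (by norm_num), ENNReal.toReal_one]
    rw [hr0']
    rw [div_le_div_iff₀ (by linarith) hc_pos]
    nlinarith [mul_nonneg (by linarith : (0:ℝ) ≤ c - (q1 + r0 - 1))
      (by linarith : (0:ℝ) ≤ c - a + b)]
  · -- the final equality
    have hSC : {ω | M1 ω ∈ ma ∧ M0 ω ∈ ma} = C := by
      rw [hCdef]; rfl
    have hSA : {ω | Y1 ω ∈ ya ∧ Y0 ω ∉ ya} ∩ C = Aset := by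
      ext ω
      simp only [hCdef, hAsetdef, Set.mem_inter_iff, Set.mem_setOf_eq]
      tauto
    have hSB : {ω | Y1 ω ∉ ya ∧ Y0 ω ∈ ya} ∩ C = Bset := by
      ext ω
      simp only [hCdef, hBsetdef, Set.mem_inter_iff, Set.mem_setOf_eq]
      tauto
    unfold condP
    rw [hSC, hSA, hSB, ← hadef, ← hbdef, ← hcdef2, sub_div]
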